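/- Let a, b be positive real numbers. Equip ℝ³ (with standard basis e₁, e₂, e₃) with the symmetric bilinear form ⟨·,·⟩ determined by ⟨e₁,e₁⟩ = −(a+b)/b, ⟨e₂,e₂⟩ = 3 − 4b/a, ⟨e₃,e₃⟩ = −1/(ab), ⟨e₁,e₂⟩ = 1, ⟨e₁,e₃⟩ = 1/b, ⟨e₂,e₃⟩ = 2/a. Set K = (1/2)e₁ + (1/2)e₂ + ((a+2b)/2)e₃ and, for t ∈ ℝ, P(t) = ((a+3b−2t)/(2(a+b)))e₁ + (1/2)e₂ + ((a+2b−2t)/2)e₃ and N(t) = ((t−b)/(a+b))e₁. Then K − t·e₃ = P(t) + N(t), ⟨P(t), e₁⟩ = 0, and ⟨P(t), e₃⟩ = (a+t)/(a(a+b)). -/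
import Mathlib


/-- With the symmetric bilinear form on `ℝ³` determined by
`⟨e₁,e₁⟩ = −(a+b)/b`, `⟨e₂,e₂⟩ = 3 − 4b/a`, `⟨e₃,e₃⟩ = −1/(ab)`, `⟨e₁,e₂⟩ = 1`,
`⟨e₁,e₃⟩ = 1/b`, `⟨e₂,e₃⟩ = 2/a`, `K = (1/2)e₁ + (1/2)e₂ + ((a+2b)/2)e₃`,
`P(t) = ((a+3b−2t)/(2(a+b)))e₁ + (1/2)e₂ + ((a+2b−2t)/2)e₃` and
`N(t) = ((t−b)/(a+b))e₁`, one has `K − t·e₃ = P(t) + N(t)`, `⟨P(t),e₁⟩ = 0`, and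
`⟨P(t),e₃⟩ = (a+t)/(a(a+b))` for every real `t`. -/
theorem stmt11 (a b : ℝ) (ha : 0 < a) (hb : 0 < b)
    (B : (Fin 3 → ℝ) →ₗ[ℝ] (Fin 3 → ℝ) →ₗ[ℝ] ℝ)
    (e₁ e₂ e₃ K : Fin 3 → ℝ) (P N : ℝ → Fin 3 → ℝ)
    (he₁ : e₁ = ![1, 0, 0]) (he₂ : e₂ = ![0, 1, 0]) (he₃ : e₃ = ![0, 0, 1])
    (hsymm : ∀ x y, B x y = B y x)
    (h11 : B e₁ e₁ = -((a + b) / b)) (h22 : B e₂ e₂ = 3 - 4 * b / a)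
    (h33 : B e₃ e₃ = -(1 / (a * b)))
    (h12 : B e₁ e₂ = 1) (h13 : B e₁ e₃ = 1 / b) (h23 : B e₂ e₃ = 2 / a)
    (hK : K = (1 / 2 : ℝ) • e₁ + (1 / 2 : ℝ) • e₂ + ((a + 2 * b) / 2) • e₃)
    (hP : ∀ t : ℝ, P t = ((a + 3 * b - 2 * t) / (2 * (a + b))) • e₁
      + (1 / 2 : ℝ) • e₂ + ((a + 2 * b - 2 * t) / 2) • e₃)
    (hN : ∀ t : ℝ, N t = ((t - b) / (a + b)) • e₁) :
    ∀ t : ℝ, K - t • e₃ = P t + N t ∧ B (P t) e₁ = 0 ∧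
      B (P t) e₃ = (a + t) / (a * (a + b)) := by
  intro t
  have h21 : B e₂ e₁ = 1 := by rw [hsymm, h12]
  have h31 : B e₃ e₁ = 1 / b := by rw [hsymm, h13]
  have h32 : B e₃ e₂ = 2 / a := by rw [hsymm, h23]
  have hab : a + b ≠ 0 := by positivity
  refine ⟨?_, ?_, ?_⟩
  · rw [hK, hP, hN]
    funext i
    simp only [Pi.add_apply, Pi.sub_apply, Pi.smul_apply, smul_eq_mul]
    field_simp
    ring
  · simp only [hP, map_add, map_smul, LinearMap.add_apply, LinearMap.smul_apply,
      smul_eq_mul, h11, h21, h31]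
    field_simp
    ring
  · simp only [hP, map_add, map_smul, LinearMap.add_apply, LinearMap.smul_apply,
      smul_eq_mul, h13, h23, h33]
    field_simp
    ring
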